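/- Let K ≥ 1, let N ≥ 1, and for each l : Fin N let 𝒜_l be a finite nonempty type. Let w, w̄ : Fin K → ℝ be strictly positive probability mass functions on Fin K, and for each j : Fin K and each l : Fin N let π_{j,l}, π̄_{j,l} : 𝒜_l → ℝ be strictly positive probability mass functions on 𝒜_l. Define the mixture-of-products distributions on Π_{l} 𝒜_l by m(a) := ∑_{j} w_j · ∏_{l} π_{j,l}(a l) and m̄(a) := ∑_{j} w̄_j · ∏_{l} π̄_{j,l}(a l). Then D_KL(m, m̄) ≤ D_KL(w, w̄) + ∑_{j} w_j · ∑_{l} D_KL(π_{j,l}, π̄_{j,l}). -/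

import Mathlib

open Finset

/-- The Kullback–Leibler divergence between two positive probability mass
functions on a finite type. -/
noncomputable def KL {X : Type*} [Fintype X] (p q : X → ℝ) : ℝ :=
  ∑ x, p x * Real.log (p x / q x)

/-- Log-sum inequality. -/
lemma log_sum_ineq {ι : Type*} (s : Finset ι) (a b : ι → ℝ)
    (ha : ∀ i ∈ s, 0 < a i) (hb : ∀ i ∈ s, 0 < b i) :
    (∑ i ∈ s, a i) * Real.log ((∑ i ∈ s, a i) / (∑ i ∈ s, b i)) ≤
      ∑ i ∈ s, a i * Real.log (a i / b i) := by
  rcases s.eq_empty_or_nonempty with rfl | hs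
  · simp
  have hA : 0 < ∑ i ∈ s, a i := Finset.sum_pos ha hs
  have hB : 0 < ∑ i ∈ s, b i := Finset.sum_pos hb hs
  set A := ∑ i ∈ s, a i with hAdef
  set B := ∑ i ∈ s, b i with hBdef
  have key : ∑ i ∈ s, a i * Real.log ((b i * A) / (a i * B)) ≤ 0 := by
    have h1 : ∀ i ∈ s, a i * Real.log ((b i * A) / (a i * B)) ≤ b i * A / B - a i := by
      intro i hi
      have hai := ha i hi
      have hbi := hb i hi
      have hx : 0 < (b i * A) / (a i * B) := by positivity
      have hlog := Real.log_le_sub_one_of_pos hx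
      have h2 : a i * Real.log ((b i * A) / (a i * B)) ≤ a i * ((b i * A) / (a i * B) - 1) :=
        mul_le_mul_of_nonneg_left hlog hai.le
      have h3 : a i * ((b i * A) / (a i * B) - 1) = b i * A / B - a i := by
        field_simp
      linarith
    calc ∑ i ∈ s, a i * Real.log ((b i * A) / (a i * B))
        ≤ ∑ i ∈ s, (b i * A / B - a i) := Finset.sum_le_sum h1
      _ = (∑ i ∈ s, b i) * A / B - A := by
          rw [Finset.sum_sub_distrib, ← Finset.sum_div, ← Finset.sum_mul, ← hAdef]
      _ = 0 := by rw [← hBdef]; field_simp; ring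
  have expand : ∀ i ∈ s, a i * Real.log ((b i * A) / (a i * B))
      = -(a i * Real.log (a i / b i)) + a i * Real.log (A / B) := by
    intro i hi
    have hai := ha i hi
    have hbi := hb i hi
    have : (b i * A) / (a i * B) = (b i / a i) * (A / B) := by field_simp
    rw [this, Real.log_mul (by positivity) (by positivity), Real.log_div hbi.ne' hai.ne',
      Real.log_div hai.ne' hbi.ne']
    ring
  rw [Finset.sum_congr rfl expand, Finset.sum_add_distrib, Finset.sum_neg_distrib,
    ← Finset.sum_mul, ← hAdef] at key
  linarith

theorem kl_mixture_of_products_le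
    (K : ℕ) (hK : 1 ≤ K) (N : ℕ) (hN : 1 ≤ N) (𝒜 : Fin N → Type*)
    [∀ l, Fintype (𝒜 l)] [∀ l, Nonempty (𝒜 l)]
    (w wb : Fin K → ℝ) (π πb : Fin K → ∀ l, 𝒜 l → ℝ)
    (hw : ∀ j, 0 < w j) (hw1 : ∑ j, w j = 1)
    (hwb : ∀ j, 0 < wb j) (hwb1 : ∑ j, wb j = 1)
    (hπ : ∀ j l x, 0 < π j l x) (hπ1 : ∀ j l, ∑ x, π j l x = 1)
    (hπb : ∀ j l x, 0 < πb j l x) (hπb1 : ∀ j l, ∑ x, πb j l x = 1) :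
    KL (fun a : ∀ l, 𝒜 l => ∑ j, w j * ∏ l, π j l (a l))
        (fun a : ∀ l, 𝒜 l => ∑ j, wb j * ∏ l, πb j l (a l))
      ≤ KL w wb + ∑ j, w j * ∑ l, KL (π j l) (πb j l) := by
  classical
  have hPpos : ∀ j (a : ∀ l, 𝒜 l), 0 < ∏ l, π j l (a l) :=
    fun j a => Finset.prod_pos fun l _ => hπ j l (a l)
  have hPbpos : ∀ j (a : ∀ l, 𝒜 l), 0 < ∏ l, πb j l (a l) :=
    fun j a => Finset.prod_pos fun l _ => hπb j l (a l)
  have hPsum : ∀ j, ∑ a : ∀ l, 𝒜 l, ∏ l, π j l (a l) = 1 := by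
    intro j
    rw [← Fintype.prod_sum (f := fun l x => π j l x)]
    simp [hπ1]
  have hMarg : ∀ j l₀, ∑ a : ∀ l, 𝒜 l,
      (∏ l, π j l (a l)) * Real.log (π j l₀ (a l₀) / πb j l₀ (a l₀))
        = KL (π j l₀) (πb j l₀) := by
    intro j l₀
    have e1 : ∀ a : ∀ l, 𝒜 l,
        (∏ l, π j l (a l)) * Real.log (π j l₀ (a l₀) / πb j l₀ (a l₀))
          = ∏ m, (π j m (a m) *
              (if m = l₀ then Real.log (π j m (a m) / πb j m (a m)) else 1)) := by
      intro a
      rw [Finset.prod_mul_distrib]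
      congr 1
      simp
    rw [Finset.sum_congr rfl fun a _ => e1 a,
      ← Fintype.prod_sum (f := fun m x => π j m x *
          (if m = l₀ then Real.log (π j m x / πb j m x) else 1))]
    have e2 : ∀ m, (∑ x, π j m x *
        (if m = l₀ then Real.log (π j m x / πb j m x) else 1))
          = if m = l₀ then KL (π j l₀) (πb j l₀) else 1 := by
      intro m
      by_cases hm : m = l₀
      · subst hm; simp [KL]
      · simp [hm, hπ1]
    rw [Finset.prod_congr rfl fun m _ => e2 m]
    simp
  have hlogsplit : ∀ j (a : ∀ l, 𝒜 l),
      Real.log ((w j * ∏ l, π j l (a l)) / (wb j * ∏ l, πb j l (a l)))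
        = Real.log (w j / wb j) + ∑ l, Real.log (π j l (a l) / πb j l (a l)) := by
    intro j a
    rw [show (w j * ∏ l, π j l (a l)) / (wb j * ∏ l, πb j l (a l))
        = (w j / wb j) * ∏ l, (π j l (a l) / πb j l (a l)) by
      rw [Finset.prod_div_distrib, div_mul_div_comm]]
    rw [Real.log_mul (div_pos (hw j) (hwb j)).ne'
        (Finset.prod_pos fun l _ => div_pos (hπ j l (a l)) (hπb j l (a l))).ne',
      Real.log_prod fun l _ => (div_pos (hπ j l (a l)) (hπb j l (a l))).ne']
  calc KL (fun a : ∀ l, 𝒜 l => ∑ j, w j * ∏ l, π j l (a l))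
        (fun a : ∀ l, 𝒜 l => ∑ j, wb j * ∏ l, πb j l (a l))
      ≤ ∑ a : ∀ l, 𝒜 l, ∑ j, (w j * ∏ l, π j l (a l)) *
          Real.log ((w j * ∏ l, π j l (a l)) / (wb j * ∏ l, πb j l (a l))) := by
        refine Finset.sum_le_sum fun a _ => ?_
        exact log_sum_ineq Finset.univ _ _
          (fun j _ => mul_pos (hw j) (hPpos j a)) (fun j _ => mul_pos (hwb j) (hPbpos j a))
    _ = ∑ j, ∑ a : ∀ l, 𝒜 l, (w j * ∏ l, π j l (a l)) *
          (Real.log (w j / wb j) + ∑ l, Real.log (π j l (a l) / πb j l (a l))) := by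
        rw [Finset.sum_comm]
        exact Finset.sum_congr rfl fun j _ => Finset.sum_congr rfl fun a _ => by
          rw [hlogsplit j a]
    _ = ∑ j, (w j * Real.log (w j / wb j) + w j * ∑ l, KL (π j l) (πb j l)) := by
        refine Finset.sum_congr rfl fun j _ => ?_
        have expand : ∀ a : ∀ l, 𝒜 l, (w j * ∏ l, π j l (a l)) *
            (Real.log (w j / wb j) + ∑ l, Real.log (π j l (a l) / πb j l (a l)))
              = (w j * Real.log (w j / wb j)) * ∏ l, π j l (a l)
                + w j * ∑ l, (∏ m, π j m (a m)) *
                    Real.log (π j l (a l) / πb j l (a l)) := by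
          intro a
          rw [mul_add, Finset.mul_sum, Finset.mul_sum]
          congr 1
          · ring
          · exact Finset.sum_congr rfl fun l _ => by ring
        rw [Finset.sum_congr rfl fun a _ => expand a, Finset.sum_add_distrib,
          ← Finset.mul_sum, hPsum, mul_one, ← Finset.mul_sum, Finset.sum_comm]
        congr 2
        exact Finset.sum_congr rfl fun l _ => hMarg j l
    _ = KL w wb + ∑ j, w j * ∑ l, KL (π j l) (πb j l) := by
        rw [Finset.sum_add_distrib]; rfl
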